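/- If (a,b) ∈ P₃, then H_Π(a,b) = (a⁴, γ_{a,b}/a) belongs to P = {(a,b) ∈ (1,2] × [1,2] : ab ≤ 2}, where γ_{a,b} = (ab + b − 2)/(a + 1 − ab). -/
import Mathlib


/-- The parameter region P₃. -/
def P3 : Set (ℝ × ℝ) :=
  {p | 1 < p.1 ∧ p.1 ≤ 2 ∧ 1 ≤ p.2 ∧ p.2 ≤ 2 ∧ p.1 * p.2 ≤ 2 ∧
    (2 + p.1 ^ 2 + p.1 ^ 3) / (1 + p.1 + p.1 ^ 3) ≤ p.2 ∧
    p.2 ≤ 2 * (1 + p.1 + p.1 ^ 3) / (p.1 * (2 + p.1 ^ 2 + p.1 ^ 3))}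

/-- The parameter region P. -/
def Pset : Set (ℝ × ℝ) :=
  {p | 1 < p.1 ∧ p.1 ≤ 2 ∧ 1 ≤ p.2 ∧ p.2 ≤ 2 ∧ p.1 * p.2 ≤ 2}

/-- The renormalization operator H_Π. -/
noncomputable def HPi (p : ℝ × ℝ) : ℝ × ℝ :=
  (p.1 ^ 4, (p.1 * p.2 + p.2 - 2) / (p.1 + 1 - p.1 * p.2) / p.1)

theorem HPi_maps_P3_into_P : ∀ p ∈ P3, HPi p ∈ Pset := by
  rintro ⟨a, b⟩ ⟨ha1, ha2, hb1, hb2, hab, hL, hU⟩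
  simp only [P3, Set.mem_setOf_eq] at *
  have ha0 : (0:ℝ) < a := lt_trans one_pos ha1
  have hden1 : (0:ℝ) < 1 + a + a ^ 3 := by positivity
  have hden2 : (0:ℝ) < a * (2 + a ^ 2 + a ^ 3) := by positivity
  -- cross-multiplied forms of hL and hU
  have hL' : 2 + a ^ 2 + a ^ 3 ≤ b * (1 + a + a ^ 3) := by
    rw [div_le_iff₀ hden1] at hL; linarith
  have hU' : b * (a * (2 + a ^ 2 + a ^ 3)) ≤ 2 * (1 + a + a ^ 3) := by
    rw [le_div_iff₀ hden2] at hU; linarith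
  -- a^5 ≤ 2
  have h5 : a ^ 5 ≤ 2 := by
    nlinarith [mul_le_mul hL' hU' (by positivity) (by positivity),
      sq_nonneg a, sq_nonneg (a^2), mul_pos hden1 hden2]
  have h4 : a ^ 4 ≤ 2 := by nlinarith
  have hd : (0:ℝ) < a + 1 - a * b := by linarith
  -- lower bound: a * (a + 1 - a*b) ≤ a*b + b - 2
  have hlow : a * (a + 1 - a * b) ≤ a * b + b - 2 := by
    nlinarith [mul_le_mul_of_nonpos_right hab (by nlinarith : a * (1 - a) ≤ 0),
      mul_nonneg ha0.le (sq_nonneg (a - 1))]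
  -- upper bound: a*b + b - 2 ≤ 2 * (a * (a + 1 - a*b))
  have hhigh : a * b + b - 2 ≤ 2 * (a * (a + 1 - a * b)) := by
    nlinarith [mul_nonneg (mul_nonneg ha0.le ha0.le) (sq_nonneg (a - 1)),
      sq_nonneg (a - 1), mul_pos ha0 ha0]
  constructor
  · simp only [HPi]; nlinarith
  refine ⟨by simpa [HPi] using h4, ?_, ?_, ?_⟩
  · simp only [HPi, div_div]
    rw [le_div_iff₀ (by positivity : (0:ℝ) < (a + 1 - a * b) * a)]
    nlinarith
  · simp only [HPi, div_div]
    rw [div_le_iff₀ (by positivity : (0:ℝ) < (a + 1 - a * b) * a)]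
    nlinarith
  · simp only [HPi, div_div]
    rw [mul_div_assoc', div_le_iff₀ (by positivity : (0:ℝ) < (a + 1 - a * b) * a)]
    nlinarith [hU']
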